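/- arXiv:1905.04048 — 3 statements merged into one kernel-verified Lean document; each statement's English description precedes it below -/
import Mathlib

section
/- Every left Λ-module M whose dimension over k is at most 3 is annihilated by (rad Λ)² ; equivalently, yx·m = 0 and zx·m = 0 for all m ∈ M, so M has Loewy length at most 2. -/
open CategoryTheory Limits Opposite

/-- The algebra `Λ = Λ(q)` of Ringel–Zhang: a `k`-algebra with distinguished elements
`x, y, z` satisfying the defining relations
`x² = y² = z² = 0`, `yz = 0`, `xy + q·yx = 0`, `xz = zx`, `zy = zx`,
and admitting the `k`-basis `{1, x, y, z, yx, zx}`.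
Any such algebra is canonically isomorphic to the quotient of the free algebra
`k⟨x,y,z⟩` by the two-sided ideal generated by these relations. -/
structure LambdaAlg (k : Type) [Field k] (q : k) (Λ : Type) [Ring Λ] [Algebra k Λ] :
    Type where
  x : Λ
  y : Λ
  z : Λ
  hxx : x * x = 0
  hyy : y * y = 0
  hzz : z * z = 0
  hyz : y * z = 0
  hxy : x * y + q • (y * x) = 0
  hxz : x * z - z * x = 0
  hzy : z * y - z * x = 0
  basis : Module.Basis (Fin 6) k Λ
  hb0 : basis 0 = 1
  hb1 : basis 1 = x
  hb2 : basis 2 = y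
  hb3 : basis 3 = z
  hb4 : basis 4 = y * x
  hb5 : basis 5 = z * x

namespace LambdaAlg

variable {k : Type} [Field k] {q : k} {Λ : Type} [Ring Λ] [Algebra k Λ]

/-- The element `ax + by + cz` of `Λ`. -/
def w (D : LambdaAlg k q Λ) (a b c : k) : Λ := a • D.x + b • D.y + c • D.z

/-- The left ideal `U(a,b,c) = Λ(ax+by+cz) + Λ·yx + Λ·zx` of `Λ`. -/
def U (D : LambdaAlg k q Λ) (a b c : k) : Submodule Λ Λ :=
  Submodule.span Λ {D.w a b c, D.y * D.x, D.z * D.x}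

/-- The left `Λ`-module `M(a,b,c) = Λ/U(a,b,c)`. -/
abbrev M (D : LambdaAlg k q Λ) (a b c : k) : Type := Λ ⧸ D.U a b c

/-- The right ideal `U′(a,b,c) = (ax+by+cz)Λ + yx·Λ + zx·Λ` of `Λ`,
viewed as a `Λᵐᵒᵖ`-submodule of `Λ`. -/
def U' (D : LambdaAlg k q Λ) (a b c : k) : Submodule Λᵐᵒᵖ Λ :=
  Submodule.span Λᵐᵒᵖ {D.w a b c, D.y * D.x, D.z * D.x}

/-- The right `Λ`-module `M′(a,b,c) = Λ/U′(a,b,c)` (a module over `Λᵐᵒᵖ`). -/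
abbrev M' (D : LambdaAlg k q Λ) (a b c : k) : Type := Λ ⧸ D.U' a b c

/-- The `k`-subspace `{m ∈ M : x·m = y·m = z·m = 0}` of a left `Λ`-module `M`;
since `x, y, z` generate `rad Λ` and every simple `Λ`-module is isomorphic to `k`,
this is the socle of `M`. -/
def ann (D : LambdaAlg k q Λ) (M : Type) [AddCommGroup M] [Module k M] [Module Λ M]
    [IsScalarTower k Λ M] : Submodule k M where
  carrier := {m | D.x • m = 0 ∧ D.y • m = 0 ∧ D.z • m = 0}
  add_mem' := by
    rintro a b ⟨h1, h2, h3⟩ ⟨g1, g2, g3⟩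
    simp [smul_add, h1, h2, h3, g1, g2, g3]
  zero_mem' := by simp
  smul_mem' := by
    rintro a m ⟨h1, h2, h3⟩
    refine ⟨?_, ?_, ?_⟩ <;> rw [smul_comm] <;> simp [h1, h2, h3]

/-- The submodule `(rad Λ)·M = x·M + y·M + z·M` of a left `Λ`-module `M`. -/
def radM (D : LambdaAlg k q Λ) (M : Type) [AddCommGroup M] [Module Λ M] :
    Submodule Λ M :=
  Submodule.span Λ
    (Set.range (fun m : M => D.x • m) ∪ Set.range (fun m : M => D.y • m) ∪
      Set.range (fun m : M => D.z • m))

end LambdaAlg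

/-- A module is indecomposable if it is nonzero and is not the direct sum of two
nonzero submodules. -/
def IsIndecomposable (R : Type) [Ring R] (M : Type) [AddCommGroup M] [Module R M] :
    Prop :=
  Nontrivial M ∧
    ∀ N₁ N₂ : Submodule R M, N₁ ⊓ N₂ = ⊥ → N₁ ⊔ N₂ = ⊤ → N₁ = ⊥ ∨ N₂ = ⊥

/-- A module is torsionless if it admits an injective linear map into a finite free
module. -/
def IsTorsionless (R : Type) [Ring R] (M : Type) [AddCommGroup M] [Module R M] : Prop :=
  ∃ (n : ℕ) (f : M →ₗ[R] (Fin n → R)), Function.Injective f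

/-- The canonical evaluation map `M → M** = Hom_{Λᵒᵖ}(Hom_Λ(M, Λ), Λ)`,
sending `m` to `f ↦ f m`. -/
def evalMap (Λ : Type) [Ring Λ] (M : Type) [AddCommGroup M] [Module Λ M] :
    M → ((M →ₗ[Λ] Λ) →ₗ[Λᵐᵒᵖ] Λ) := fun m =>
  { toFun := fun f => f m
    map_add' := fun _ _ => rfl
    map_smul' := fun _ _ => rfl }

/-- The transformation `ω′(a,b,c) = (a, q⁻¹b, −((a+q⁻¹b)/a)·c)` on triples. -/
def omegaPrime {k : Type} [Field k] (q : k) (t : k × k × k) : k × k × k :=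
  (t.1, q⁻¹ * t.2.1, -((t.1 + q⁻¹ * t.2.1) / t.1) * t.2.2)

lemma keyLemma {k : Type} [Field k] {Λ : Type} [Ring Λ] [Algebra k Λ]
    {M : Type} [AddCommGroup M] [Module k M] [Module Λ M] [IsScalarTower k Λ M]
    (hdim : Module.rank k M ≤ 3) (A B : Λ) (c : k) (hc : c ≠ 0)
    (hA : A * A = 0) (hB : B * B = 0) (hAB : A * B = c • (B * A)) (m : M) :
    (B * A) • m = 0 := by
  by_contra hne
  have e1 : (B * A) * A = 0 := by rw [mul_assoc, hA, mul_zero]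
  have e2 : (B * A) * B = 0 := by
    rw [mul_assoc, hAB, mul_smul_comm, ← mul_assoc, hB, zero_mul, smul_zero]
  have e3 : (B * A) * (B * A) = 0 := by rw [← mul_assoc, e2, zero_mul]
  have e4 : B * (B * A) = 0 := by rw [← mul_assoc, hB, zero_mul]
  have e5 : A * (B * A) = 0 := by
    rw [← mul_assoc, hAB, smul_mul_assoc, mul_assoc, hA, mul_zero, smul_zero]
  have hcomm : ∀ (a : k) (l : Λ) (v : M), l • a • v = a • l • v :=
    fun a l v => smul_comm l a v
  have hassoc : ∀ (l₁ l₂ : Λ) (v : M), l₁ • l₂ • v = (l₁ * l₂) • v :=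
    fun l₁ l₂ v => (mul_smul l₁ l₂ v).symm
  have li : LinearIndependent k ![m, A • m, B • m, (B * A) • m] := by
    rw [Fintype.linearIndependent_iff]
    intro g hg
    simp only [Fin.sum_univ_four, Matrix.cons_val_zero, Matrix.cons_val_one,
      Matrix.head_cons, Matrix.cons_val_two, Matrix.tail_cons, Matrix.cons_val_three] at hg
    have h0 : g 0 = 0 := by
      have := congrArg (fun v => (B * A) • v) hg
      simp only [smul_add, hcomm, hassoc, e1, e2, e3, zero_smul, smul_zero, add_zero] at this
      rcases smul_eq_zero.mp this with h | h
      · exact h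
      · exact absurd h hne
    rw [h0, zero_smul, zero_add] at hg
    have h1 : g 1 = 0 := by
      have := congrArg (fun v => B • v) hg
      simp only [smul_add, hcomm, hassoc, hB, e4, zero_smul, smul_zero, add_zero] at this
      rcases smul_eq_zero.mp this with h | h
      · exact h
      · exact absurd h hne
    rw [h1, zero_smul, zero_add] at hg
    have h2 : g 2 = 0 := by
      have := congrArg (fun v => A • v) hg
      simp only [smul_add, hcomm, hassoc, hAB, e5, zero_smul, smul_zero, add_zero,
        smul_assoc] at this
      rw [smul_smul, smul_eq_zero] at this
      rcases this with h | h
      · exact (mul_eq_zero.mp h).resolve_right hc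
      · exact absurd h hne
    rw [h2, zero_smul, zero_add] at hg
    have h3 : g 3 = 0 := by
      rcases smul_eq_zero.mp hg with h | h
      · exact h
      · exact absurd h hne
    intro i
    fin_cases i <;> assumption
  have h4 := li.cardinal_le_rank
  rw [Cardinal.mk_fin] at h4
  have : (4 : Cardinal) ≤ 3 := h4.trans hdim
  norm_num at this

/-- Every left `Λ`-module of `k`-dimension at most 3 is annihilated by `(rad Λ)²`,
i.e. `yx·m = 0` and `zx·m = 0` for all `m ∈ M`. -/
theorem statement0 (k : Type) [Field k] (q : k) (hq : q ≠ 0)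
    (Λ : Type) [Ring Λ] [Algebra k Λ] (D : LambdaAlg k q Λ)
    (M : Type) [AddCommGroup M] [Module k M] [Module Λ M] [IsScalarTower k Λ M]
    (hdim : Module.rank k M ≤ 3) (m : M) :
    (D.y * D.x) • m = 0 ∧ (D.z * D.x) • m = 0 := by
  constructor
  · refine keyLemma hdim D.x D.y (-q) (neg_ne_zero.mpr hq) D.hxx D.hyy ?_ m
    have h := D.hxy
    rw [neg_smul, eq_neg_iff_add_eq_zero, h]
  · refine keyLemma hdim D.x D.z 1 one_ne_zero D.hxx D.hzz ?_ m
    rw [one_smul]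
    exact sub_eq_zero.mp D.hxz
end

section
/- For (a,b,c) ∈ k³ \ {(0,0,0)}, the left ideal Λ(ax+by+cz) of Λ is 2-dimensional over k if and only if a + b = 0 and ac = 0. Moreover, the left ideal Λ(x−y) has k-basis {x−y, yx} and the left ideal Λz has k-basis {z, zx}. -/
open CategoryTheory Limits Opposite

namespace LambdaAlg

variable {k : Type} [Field k] {q : k} {Λ : Type} [Ring Λ] [Algebra k Λ]

variable (D : LambdaAlg k q Λ)

lemma lxy : D.x * D.y = (-q) • (D.y * D.x) := by
  rw [neg_smul]; exact eq_neg_of_add_eq_zero_left D.hxy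
lemma lxz : D.x * D.z = D.z * D.x := sub_eq_zero.mp D.hxz
lemma lzy : D.z * D.y = D.z * D.x := sub_eq_zero.mp D.hzy

lemma lxyx : D.x * (D.y * D.x) = 0 := by
  rw [← mul_assoc, D.lxy, smul_mul_assoc, mul_assoc, D.hxx, mul_zero, smul_zero]
lemma lxzx : D.x * (D.z * D.x) = 0 := by
  rw [← mul_assoc, D.lxz, mul_assoc, D.hxx, mul_zero]
lemma lyyx : D.y * (D.y * D.x) = 0 := by rw [← mul_assoc, D.hyy, zero_mul]
lemma lyzx : D.y * (D.z * D.x) = 0 := by rw [← mul_assoc, D.hyz, zero_mul]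
lemma lzyx : D.z * (D.y * D.x) = 0 := by
  rw [← mul_assoc, D.lzy, mul_assoc, D.hxx, mul_zero]
lemma lzzx : D.z * (D.z * D.x) = 0 := by rw [← mul_assoc, D.hzz, zero_mul]

lemma lxw (a b c : k) : D.x * D.w a b c = (-(q*b)) • (D.y * D.x) + c • (D.z * D.x) := by
  simp only [w, mul_add, mul_smul_comm, D.hxx, D.lxy, D.lxz, smul_zero, zero_add, smul_smul]
  module
lemma lyw (a b c : k) : D.y * D.w a b c = a • (D.y * D.x) := by
  simp only [w, mul_add, mul_smul_comm, D.hyy, D.hyz, smul_zero, add_zero]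
lemma lzw (a b c : k) : D.z * D.w a b c = (a+b) • (D.z * D.x) := by
  simp only [w, mul_add, mul_smul_comm, D.hzz, D.lzy, smul_zero, add_zero]
  module

lemma coeffs (co : Fin 6 → k) (h : ∑ i, co i • D.basis i = 0) : ∀ i, co i = 0 :=
  Fintype.linearIndependent_iff.mp D.basis.linearIndependent co h

lemma mul_span_mem (S : Set Λ)
    (h : ∀ i : Fin 6, ∀ s ∈ S, D.basis i * s ∈ Submodule.span k S) :
    ∀ (r : Λ), ∀ u ∈ Submodule.span k S, r * u ∈ Submodule.span k S := by
  have step : ∀ i : Fin 6, ∀ u ∈ Submodule.span k S, D.basis i * u ∈ Submodule.span k S := by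
    intro i u hu
    induction hu using Submodule.span_induction with
    | mem s hs => exact h i s hs
    | zero => simp
    | add u v _ _ hu hv => rw [mul_add]; exact add_mem hu hv
    | smul c u _ hu => rw [mul_smul_comm]; exact Submodule.smul_mem _ _ hu
  intro r u hu
  have hr : r ∈ Submodule.span k (Set.range ⇑D.basis) := by
    rw [D.basis.span_eq]; exact Submodule.mem_top
  induction hr using Submodule.span_induction with
  | mem e he => obtain ⟨i, rfl⟩ := he; exact step i u hu
  | zero => rw [zero_mul]; exact zero_mem _
  | add r1 r2 _ _ h1 h2 => rw [add_mul]; exact add_mem h1 h2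
  | smul c r _ h1 => rw [smul_mul_assoc]; exact Submodule.smul_mem _ _ h1

lemma span_restrict_le (v : Λ) (S : Set Λ)
    (h : ∀ i : Fin 6, ∀ s ∈ S, D.basis i * s ∈ Submodule.span k S)
    (hv : v ∈ Submodule.span k S) :
    (Submodule.span Λ {v}).restrictScalars k ≤ Submodule.span k S := by
  intro u hu
  have hu' : u ∈ Submodule.span Λ {v} := hu
  clear hu
  induction hu' using Submodule.span_induction with
  | mem s hs => rw [Set.mem_singleton_iff] at hs; subst hs; exact hv
  | zero => exact zero_mem _
  | add u v _ _ h1 h2 => exact add_mem h1 h2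
  | smul r u _ h1 => rw [smul_eq_mul]; exact D.mul_span_mem S h r u h1


lemma memA : D.y * D.x ∈ Submodule.span Λ {D.x - D.y} := by
  rw [Submodule.mem_span_singleton]
  exact ⟨D.y, by rw [smul_eq_mul, mul_sub, D.hyy, sub_zero]⟩

lemma memB : D.z * D.x ∈ Submodule.span Λ {D.z} := by
  rw [Submodule.mem_span_singleton]
  exact ⟨D.x, by rw [smul_eq_mul, D.lxz]⟩

lemma spanA : (Submodule.span Λ {D.x - D.y}).restrictScalars k
    = Submodule.span k {D.x - D.y, D.y * D.x} := by
  apply le_antisymm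
  · apply D.span_restrict_le
    · intro i s hs
      fin_cases i <;>
        rcases hs with rfl | rfl <;>
          simp only [show (⟨0,by omega⟩:Fin 6) = 0 from rfl, show (⟨1,by omega⟩:Fin 6) = 1 from rfl,
            show (⟨2,by omega⟩:Fin 6) = 2 from rfl, show (⟨3,by omega⟩:Fin 6) = 3 from rfl,
            show (⟨4,by omega⟩:Fin 6) = 4 from rfl, show (⟨5,by omega⟩:Fin 6) = 5 from rfl,
            D.hb0, D.hb1, D.hb2, D.hb3, D.hb4, D.hb5, one_mul, mul_sub, sub_mul,
            mul_assoc, mul_smul_comm, smul_mul_assoc, D.hxx, D.hyy, D.hzz, D.hyz,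
            D.lxy, D.lxz, D.lzy, D.lxyx, D.lxzx, D.lyyx, D.lyzx, D.lzyx, D.lzzx,
            smul_zero, mul_zero, zero_mul, sub_zero, zero_sub, sub_self, neg_smul, neg_neg, mul_neg, neg_mul,
            neg_zero] <;>
        first
          | exact zero_mem _
          | (refine Submodule.subset_span ?_; simp; done)
          | (refine Submodule.smul_mem _ _ (Submodule.subset_span ?_); simp; done)
          | (refine Submodule.neg_mem _ (Submodule.smul_mem _ _ (Submodule.subset_span ?_)); simp; done)
    · exact Submodule.subset_span (by simp)
  · rw [Submodule.span_le]
    rintro s (rfl | rfl)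
    · exact Submodule.mem_span_singleton_self _
    · exact D.memA

lemma spanB : (Submodule.span Λ {D.z}).restrictScalars k
    = Submodule.span k {D.z, D.z * D.x} := by
  apply le_antisymm
  · apply D.span_restrict_le
    · intro i s hs
      fin_cases i <;>
        rcases hs with rfl | rfl <;>
          simp only [show (⟨0,by omega⟩:Fin 6) = 0 from rfl, show (⟨1,by omega⟩:Fin 6) = 1 from rfl,
            show (⟨2,by omega⟩:Fin 6) = 2 from rfl, show (⟨3,by omega⟩:Fin 6) = 3 from rfl,
            show (⟨4,by omega⟩:Fin 6) = 4 from rfl, show (⟨5,by omega⟩:Fin 6) = 5 from rfl,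
            D.hb0, D.hb1, D.hb2, D.hb3, D.hb4, D.hb5, one_mul, mul_sub, sub_mul,
            mul_assoc, mul_smul_comm, smul_mul_assoc, D.hxx, D.hyy, D.hzz, D.hyz,
            D.lxy, D.lxz, D.lzy, D.lxyx, D.lxzx, D.lyyx, D.lyzx, D.lzyx, D.lzzx,
            smul_zero, mul_zero, zero_mul, sub_zero, zero_sub, sub_self, neg_smul, neg_neg, mul_neg, neg_mul,
            neg_zero] <;>
        first
          | exact zero_mem _
          | (refine Submodule.subset_span ?_; simp; done)
          | (refine Submodule.smul_mem _ _ (Submodule.subset_span ?_); simp; done)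
          | (refine Submodule.neg_mem _ (Submodule.smul_mem _ _ (Submodule.subset_span ?_)); simp; done)
    · exact Submodule.subset_span (by simp)
  · rw [Submodule.span_le]
    rintro s (rfl | rfl)
    · exact Submodule.mem_span_singleton_self _
    · exact D.memB

lemma liA : LinearIndependent k ![D.x - D.y, D.y * D.x] := by
  rw [LinearIndependent.pair_iff]
  intro s t hst
  have h6 : ∑ i, (![0, s, -s, 0, t, 0] : Fin 6 → k) i • D.basis i = 0 := by
    rw [Fin.sum_univ_six]
    simp only [Matrix.cons_val_zero, Matrix.cons_val_one, Matrix.head_cons, Matrix.cons_val_two,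
      Matrix.tail_cons, Matrix.cons_val_three, Matrix.cons_val_four,
      show (5 : Fin 6) = Fin.succ 4 from rfl, Matrix.cons_val_succ, D.hb0, D.hb1, D.hb2, D.hb3,
      D.hb4]
    rw [show (Fin.succ 4 : Fin 6) = 5 from rfl, D.hb5]
    linear_combination (norm := module) hst
  have hc := D.coeffs _ h6
  exact ⟨by simpa using hc 1, by simpa using hc 4⟩

lemma liB : LinearIndependent k ![D.z, D.z * D.x] := by
  rw [LinearIndependent.pair_iff]
  intro s t hst
  have h6 : ∑ i, (![0, 0, 0, s, 0, t] : Fin 6 → k) i • D.basis i = 0 := by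
    rw [Fin.sum_univ_six]
    simp only [Matrix.cons_val_zero, Matrix.cons_val_one, Matrix.head_cons, Matrix.cons_val_two,
      Matrix.tail_cons, Matrix.cons_val_three, Matrix.cons_val_four,
      show (5 : Fin 6) = Fin.succ 4 from rfl, Matrix.cons_val_succ, D.hb0, D.hb1, D.hb2, D.hb3,
      D.hb4]
    rw [show (Fin.succ 4 : Fin 6) = 5 from rfl, D.hb5]
    linear_combination (norm := module) hst
  have hc := D.coeffs _ h6
  exact ⟨by simpa using hc 3, by simpa using hc 5⟩

lemma liT (a b c : k) (h : ¬(a = 0 ∧ b = 0 ∧ c = 0)) :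
    LinearIndependent k ![D.w a b c, D.y * D.x, D.z * D.x] := by
  apply Fintype.linearIndependent_iff.mpr
  intro g hg
  rw [Fin.sum_univ_three] at hg
  simp only [Matrix.cons_val_zero, Matrix.cons_val_one, Matrix.head_cons, Matrix.cons_val_two,
    Matrix.tail_cons, w] at hg
  have h6 : ∑ i, (![0, g 0 * a, g 0 * b, g 0 * c, g 1, g 2] : Fin 6 → k) i • D.basis i = 0 := by
    rw [Fin.sum_univ_six]
    simp only [Matrix.cons_val_zero, Matrix.cons_val_one, Matrix.head_cons, Matrix.cons_val_two,
      Matrix.tail_cons, Matrix.cons_val_three, Matrix.cons_val_four,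
      show (5 : Fin 6) = Fin.succ 4 from rfl, Matrix.cons_val_succ, D.hb0, D.hb1, D.hb2, D.hb3,
      D.hb4]
    rw [show (Fin.succ 4 : Fin 6) = 5 from rfl, D.hb5]
    linear_combination (norm := module) hg
  have hc := D.coeffs _ h6
  have ha : g 0 * a = 0 := by simpa using hc 1
  have hb : g 0 * b = 0 := by simpa using hc 2
  have hcc : g 0 * c = 0 := by simpa using hc 3
  have hg0 : g 0 = 0 := by
    by_contra hg0
    exact h ⟨(mul_eq_zero.mp ha).resolve_left hg0, (mul_eq_zero.mp hb).resolve_left hg0,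
      (mul_eq_zero.mp hcc).resolve_left hg0⟩
  intro i
  fin_cases i
  · exact hg0
  · simpa using hc 4
  · simpa using hc 5

lemma span_ksmul (a : k) (ha : a ≠ 0) (v : Λ) :
    Submodule.span Λ {a • v} = Submodule.span Λ {v} := by
  apply le_antisymm <;> rw [Submodule.span_le, Set.singleton_subset_iff]
  · exact Submodule.smul_of_tower_mem _ a (Submodule.mem_span_singleton_self v)
  · have h := Submodule.smul_of_tower_mem (Submodule.span Λ {a • v}) a⁻¹
      (Submodule.mem_span_singleton_self (a • v))
    rwa [smul_smul, inv_mul_cancel₀ ha, one_smul] at h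

lemma frank2 (v1 v2 : Λ) (h : LinearIndependent k ![v1, v2]) :
    Module.finrank k ↥(Submodule.span k {v1, v2}) = 2 := by
  have h2 := finrank_span_eq_card h
  rw [show Set.range ![v1, v2] = {v1, v2} by
    ext u; simp [Fin.exists_fin_two]; tauto] at h2
  simpa using h2

end LambdaAlg

/-- The left ideal `Λ(ax+by+cz)` is 2-dimensional over `k` iff `a + b = 0` and
`ac = 0`; moreover `Λ(x−y)` has `k`-basis `{x−y, yx}` and `Λz` has `k`-basis
`{z, zx}`. -/
theorem statement1 (k : Type) [Field k] (q : k) (hq : q ≠ 0)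
    (Λ : Type) [Ring Λ] [Algebra k Λ] (D : LambdaAlg k q Λ) :
    (∀ a b c : k, (a, b, c) ≠ (0, 0, 0) →
      (Module.finrank k ↥(Submodule.span Λ {D.w a b c}) = 2 ↔ a + b = 0 ∧ a * c = 0))
    ∧ ((Submodule.span Λ {D.x - D.y}).restrictScalars k
         = Submodule.span k {D.x - D.y, D.y * D.x}
       ∧ LinearIndependent k ![D.x - D.y, D.y * D.x])
    ∧ ((Submodule.span Λ {D.z}).restrictScalars k = Submodule.span k {D.z, D.z * D.x}
       ∧ LinearIndependent k ![D.z, D.z * D.x]) :=  by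
  haveI hfin : Module.Finite k Λ := Module.Finite.of_basis D.basis
  refine ⟨?_, ⟨D.spanA, D.liA⟩, ⟨D.spanB, D.liB⟩⟩
  intro a b c habc
  have habc' : ¬(a = 0 ∧ b = 0 ∧ c = 0) := by
    rintro ⟨rfl, rfl, rfl⟩; exact habc rfl
  constructor
  · intro h2
    by_contra hcon
    set p := Submodule.span Λ {D.w a b c} with hp
    have hwp : D.w a b c ∈ p := Submodule.mem_span_singleton_self _
    have hx : (-(q*b)) • (D.y * D.x) + c • (D.z * D.x) ∈ p := by
      have h := p.smul_mem (D.x) hwp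
      rwa [smul_eq_mul, D.lxw] at h
    have hy : a • (D.y * D.x) ∈ p := by
      have h := p.smul_mem (D.y) hwp
      rwa [smul_eq_mul, D.lyw] at h
    have hz : (a + b) • (D.z * D.x) ∈ p := by
      have h := p.smul_mem (D.z) hwp
      rwa [smul_eq_mul, D.lzw] at h
    have cancel : ∀ (d : k), d ≠ 0 → ∀ v : Λ, d • v ∈ p → v ∈ p := by
      intro d hd v h
      have h' := Submodule.smul_of_tower_mem p d⁻¹ h
      rwa [smul_smul, inv_mul_cancel₀ hd, one_smul] at h'
    have key : D.y * D.x ∈ p ∧ D.z * D.x ∈ p := by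
      by_cases ha : a = 0
      · have hb : b ≠ 0 := by
          intro hb; exact hcon ⟨by rw [ha, hb, add_zero], by rw [ha, zero_mul]⟩
        have hzx : D.z * D.x ∈ p := by
          exact cancel (a+b) (by rw [ha, zero_add]; exact hb) _ hz
        have hyx : D.y * D.x ∈ p := by
          apply cancel (-(q*b)) (by simp [hq, hb])
          rw [show (-(q*b)) • (D.y * D.x)
              = ((-(q*b)) • (D.y * D.x) + c • (D.z * D.x)) - c • (D.z * D.x) from
            (add_sub_cancel_right _ _).symm]
          exact sub_mem hx (Submodule.smul_of_tower_mem p c hzx)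
        exact ⟨hyx, hzx⟩
      · have hyx := cancel a ha _ hy
        by_cases hab : a + b = 0
        · have hc : c ≠ 0 := by
            intro hc; exact hcon ⟨hab, by rw [hc, mul_zero]⟩
          have hzx : D.z * D.x ∈ p := by
            apply cancel c hc
            rw [show c • (D.z * D.x)
                = ((-(q*b)) • (D.y * D.x) + c • (D.z * D.x)) - (-(q*b)) • (D.y * D.x) from
              (add_sub_cancel_left _ _).symm]
            exact sub_mem hx (Submodule.smul_of_tower_mem p _ hyx)
          exact ⟨hyx, hzx⟩
        · exact ⟨hyx, cancel _ hab _ hz⟩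
    have hle : Submodule.span k {D.w a b c, D.y * D.x, D.z * D.x} ≤ p.restrictScalars k := by
      rw [Submodule.span_le]
      rintro s (rfl | rfl | rfl)
      exacts [hwp, key.1, key.2]
    have h3 : Module.finrank k ↥(Submodule.span k {D.w a b c, D.y * D.x, D.z * D.x}) = 3 := by
      have hr := finrank_span_eq_card (D.liT a b c habc')
      rw [show Set.range ![D.w a b c, D.y * D.x, D.z * D.x]
          = {D.w a b c, D.y * D.x, D.z * D.x} from ?_] at hr
      · simpa using hr
      · ext u; constructor
        · rintro ⟨i, rfl⟩; fin_cases i <;> simp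
        · rintro (rfl | rfl | rfl); exacts [⟨0, rfl⟩, ⟨1, rfl⟩, ⟨2, rfl⟩]
    have hmono := Submodule.finrank_mono hle
    rw [h3] at hmono
    have h2' : Module.finrank k ↥(p.restrictScalars k) = 2 := h2
    omega
  · rintro ⟨hab, hac⟩
    by_cases ha : a = 0
    · have hb : b = 0 := by rw [ha, zero_add] at hab; exact hab
      have hc : c ≠ 0 := by rintro rfl; exact habc (by rw [ha, hb])
      have hw : D.w a b c = c • D.z := by
        rw [ha, hb]; simp [LambdaAlg.w]
      rw [hw, LambdaAlg.span_ksmul c hc]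
      show Module.finrank k ↥((Submodule.span Λ {D.z}).restrictScalars k) = 2
      rw [D.spanB]
      exact LambdaAlg.frank2 _ _ D.liB
    · have hc : c = 0 := (mul_eq_zero.mp hac).resolve_left ha
      have hb : b = -a := by linear_combination hab
      have hw : D.w a b c = a • (D.x - D.y) := by
        rw [hb, hc]; simp only [LambdaAlg.w, smul_sub, neg_smul, zero_smul, add_zero]; abel
      rw [hw, LambdaAlg.span_ksmul a ha]
      show Module.finrank k ↥((Submodule.span Λ {D.x - D.y}).restrictScalars k) = 2
      rw [D.spanA]
      exact LambdaAlg.frank2 _ _ D.liA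
end

section
/- For (a,b,c) ∈ k³ \ {(0,0,0)}: if a ≠ 0 or bc ≠ 0, then the right ideal (ax+by+cz)Λ is 3-dimensional over k and equals U(a,b,c) (in particular U(a,b,c) is a two-sided ideal); the right ideals yΛ = (0,1,0)Λ and zΛ = (0,0,1)Λ are 2-dimensional over k, with yΛ having k-basis {y, yx} and zΛ having k-basis {z, zx}. -/
open CategoryTheory Limits Opposite

namespace RZAux

open LambdaAlg

variable {k : Type} [Field k] {q : k} {Λ : Type} [Ring Λ] [Algebra k Λ]
variable (D : LambdaAlg k q Λ)

lemma xy_eq : D.x * D.y = -(q • (D.y * D.x)) := eq_neg_of_add_eq_zero_left D.hxy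
lemma xz_eq : D.x * D.z = D.z * D.x := sub_eq_zero.mp D.hxz
lemma zy_eq : D.z * D.y = D.z * D.x := sub_eq_zero.mp D.hzy

lemma x_mul_yx : D.x * (D.y * D.x) = 0 := by
  rw [← mul_assoc, xy_eq, neg_mul, smul_mul_assoc, mul_assoc, D.hxx, mul_zero, smul_zero, neg_zero]
lemma y_mul_yx : D.y * (D.y * D.x) = 0 := by rw [← mul_assoc, D.hyy, zero_mul]
lemma z_mul_yx : D.z * (D.y * D.x) = 0 := by
  rw [← mul_assoc, zy_eq, mul_assoc, D.hxx, mul_zero]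
lemma x_mul_zx : D.x * (D.z * D.x) = 0 := by
  rw [← mul_assoc, xz_eq, mul_assoc, D.hxx, mul_zero]
lemma y_mul_zx : D.y * (D.z * D.x) = 0 := by rw [← mul_assoc, D.hyz, zero_mul]
lemma z_mul_zx : D.z * (D.z * D.x) = 0 := by rw [← mul_assoc, D.hzz, zero_mul]

lemma yx_mul_x : (D.y * D.x) * D.x = 0 := by rw [mul_assoc, D.hxx, mul_zero]
lemma zx_mul_x : (D.z * D.x) * D.x = 0 := by rw [mul_assoc, D.hxx, mul_zero]
lemma yx_mul_y : (D.y * D.x) * D.y = 0 := by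
  rw [mul_assoc, xy_eq, mul_neg, mul_smul_comm, y_mul_yx, smul_zero, neg_zero]
lemma zx_mul_y : (D.z * D.x) * D.y = 0 := by
  rw [mul_assoc, xy_eq, mul_neg, mul_smul_comm, z_mul_yx, smul_zero, neg_zero]
lemma yx_mul_z : (D.y * D.x) * D.z = 0 := by
  rw [mul_assoc, xz_eq, y_mul_zx]
lemma zx_mul_z : (D.z * D.x) * D.z = 0 := by
  rw [mul_assoc, xz_eq, z_mul_zx]
lemma yx_mul_yx : (D.y * D.x) * (D.y * D.x) = 0 := by
  rw [← mul_assoc, yx_mul_y, zero_mul]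
lemma yx_mul_zx : (D.y * D.x) * (D.z * D.x) = 0 := by
  rw [← mul_assoc, yx_mul_z, zero_mul]
lemma zx_mul_yx : (D.z * D.x) * (D.y * D.x) = 0 := by
  rw [← mul_assoc, zx_mul_y, zero_mul]
lemma zx_mul_zx : (D.z * D.x) * (D.z * D.x) = 0 := by
  rw [← mul_assoc, zx_mul_z, zero_mul]

variable (a b c : k)

lemma w_mul_x : D.w a b c * D.x = b • (D.y * D.x) + c • (D.z * D.x) := by
  simp [LambdaAlg.w, add_mul, smul_mul_assoc, D.hxx]
lemma w_mul_y : D.w a b c * D.y = -((a * q) • (D.y * D.x)) + c • (D.z * D.x) := by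
  simp [LambdaAlg.w, add_mul, smul_mul_assoc, D.hyy, xy_eq, zy_eq, smul_smul, smul_neg]
lemma w_mul_z : D.w a b c * D.z = a • (D.z * D.x) := by
  simp [LambdaAlg.w, add_mul, smul_mul_assoc, D.hzz, D.hyz, xz_eq]
lemma w_mul_yx : D.w a b c * (D.y * D.x) = 0 := by
  simp [LambdaAlg.w, add_mul, smul_mul_assoc, x_mul_yx, y_mul_yx, z_mul_yx]
lemma w_mul_zx : D.w a b c * (D.z * D.x) = 0 := by
  simp [LambdaAlg.w, add_mul, smul_mul_assoc, x_mul_zx, y_mul_zx, z_mul_zx]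

lemma x_mul_w : D.x * D.w a b c = -((b * q) • (D.y * D.x)) + c • (D.z * D.x) := by
  simp [LambdaAlg.w, mul_add, mul_smul_comm, D.hxx, xy_eq, xz_eq, smul_smul, smul_neg,
    mul_comm]
lemma y_mul_w : D.y * D.w a b c = a • (D.y * D.x) := by
  simp [LambdaAlg.w, mul_add, mul_smul_comm, D.hyy, D.hyz]
lemma z_mul_w : D.z * D.w a b c = (a + b) • (D.z * D.x) := by
  simp [LambdaAlg.w, mul_add, mul_smul_comm, D.hzz, zy_eq, add_smul]
lemma yx_mul_w : (D.y * D.x) * D.w a b c = 0 := by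
  simp [LambdaAlg.w, mul_add, mul_smul_comm, yx_mul_x, yx_mul_y, yx_mul_z]
lemma zx_mul_w : (D.z * D.x) * D.w a b c = 0 := by
  simp [LambdaAlg.w, mul_add, mul_smul_comm, zx_mul_x, zx_mul_y, zx_mul_z]

/-- If `g * bᵢ ∈ T` for every basis vector, then `g * r ∈ T` for all `r`. -/
lemma mul_right_mem (T : Submodule k Λ) (g : Λ) (h : ∀ i, g * D.basis i ∈ T) (r : Λ) :
    g * r ∈ T := by
  rw [← D.basis.sum_repr r, Finset.mul_sum]
  exact Submodule.sum_mem _ fun i _ => by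
    rw [mul_smul_comm]; exact T.smul_mem _ (h i)

lemma mul_left_mem (T : Submodule k Λ) (g : Λ) (h : ∀ i, D.basis i * g ∈ T) (r : Λ) :
    r * g ∈ T := by
  rw [← D.basis.sum_repr r, Finset.sum_mul]
  exact Submodule.sum_mem _ fun i _ => by
    rw [smul_mul_assoc]; exact T.smul_mem _ (h i)


lemma mul_mem_opSpan {N : Submodule Λᵐᵒᵖ Λ} {m : Λ} (hm : m ∈ N) (r : Λ) : m * r ∈ N := by
  simpa [MulOpposite.smul_eq_mul_unop] using N.smul_mem (MulOpposite.op r) hm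

lemma ksmul_mem_opSpan {N : Submodule Λᵐᵒᵖ Λ} {m : Λ} (hm : m ∈ N) (c : k) : c • m ∈ N := by
  have h : c • m = (MulOpposite.op (algebraMap k Λ c)) • m := by
    rw [MulOpposite.smul_eq_mul_unop, MulOpposite.unop_op, ← Algebra.commutes, ← Algebra.smul_def]
  rw [h]; exact N.smul_mem _ hm

lemma span_pair_eq (g h : Λ)
    (tab : ∀ i, g * D.basis i ∈ Submodule.span k {g, h})
    (hh : ∃ r : Λ, g * r = h) :
    (Submodule.span Λᵐᵒᵖ {g} : Set Λ) = (Submodule.span k {g, h} : Set Λ) := by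
  apply Set.Subset.antisymm
  · intro m hm
    rw [SetLike.mem_coe, Submodule.mem_span_singleton] at hm
    obtain ⟨r, rfl⟩ := hm
    rw [MulOpposite.smul_eq_mul_unop]
    exact mul_right_mem D _ g tab _
  · have hle : Submodule.span k {g, h} ≤ (Submodule.span Λᵐᵒᵖ {g}).restrictScalars k := by
      rw [Submodule.span_le]
      rintro m hm
      simp only [Set.mem_insert_iff, Set.mem_singleton_iff] at hm
      rcases hm with rfl | rfl
      · exact Submodule.mem_span_singleton_self m
      · obtain ⟨r, hr⟩ := hh
        rw [← hr]
        exact mul_mem_opSpan (Submodule.mem_span_singleton_self g) r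
    exact fun m hm => hle hm


lemma part1 (hq : q ≠ 0) (ha : a ≠ 0 ∨ b * c ≠ 0) :
    Module.finrank k ↥(Submodule.span Λᵐᵒᵖ {D.w a b c}) = 3
    ∧ (Submodule.span Λᵐᵒᵖ {D.w a b c} : Set Λ) = (D.U a b c : Set Λ) := by
  classical
  set T : Submodule k Λ := Submodule.span k {D.w a b c, D.y * D.x, D.z * D.x} with hTdef
  have hwT : D.w a b c ∈ T := Submodule.subset_span (by simp)
  have hyxT : D.y * D.x ∈ T := Submodule.subset_span (by simp)
  have hzxT : D.z * D.x ∈ T := Submodule.subset_span (by simp)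
  -- right multiplication table for w
  have tabw : ∀ i, D.w a b c * D.basis i ∈ T := by
    intro i
    fin_cases i <;> simp only [Fin.reduceFinMk, Fin.zero_eta, Fin.mk_one]
    · rw [D.hb0, mul_one]; exact hwT
    · rw [D.hb1, w_mul_x]; exact add_mem (T.smul_mem _ hyxT) (T.smul_mem _ hzxT)
    · rw [D.hb2, w_mul_y]; exact add_mem (neg_mem (T.smul_mem _ hyxT)) (T.smul_mem _ hzxT)
    · rw [D.hb3, w_mul_z]; exact T.smul_mem _ hzxT
    · rw [D.hb4, w_mul_yx]; exact zero_mem _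
    · rw [D.hb5, w_mul_zx]; exact zero_mem _
  -- N ⊆ T
  have hsub1 : (Submodule.span Λᵐᵒᵖ {D.w a b c} : Set Λ) ⊆ (T : Set Λ) := by
    intro m hm
    rw [SetLike.mem_coe, Submodule.mem_span_singleton] at hm
    obtain ⟨r, rfl⟩ := hm
    rw [MulOpposite.smul_eq_mul_unop]
    exact mul_right_mem D _ _ tabw _
  -- yx, zx ∈ N
  have hwN : D.w a b c ∈ Submodule.span Λᵐᵒᵖ {D.w a b c} := Submodule.mem_span_singleton_self _
  have hzyxN : D.z * D.x ∈ Submodule.span Λᵐᵒᵖ {D.w a b c}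
      ∧ D.y * D.x ∈ Submodule.span Λᵐᵒᵖ {D.w a b c} := by
    set N := Submodule.span Λᵐᵒᵖ {D.w a b c} with hNdef
    by_cases ha0 : a = 0
    · have hbc : b * c ≠ 0 := ha.resolve_left (by simp [ha0])
      have hb : b ≠ 0 := left_ne_zero_of_mul hbc
      have hc : c ≠ 0 := right_ne_zero_of_mul hbc
      have h1 : D.w a b c * D.y ∈ N := mul_mem_opSpan hwN _
      rw [w_mul_y, ha0] at h1
      simp only [zero_mul, zero_smul, neg_zero, zero_add] at h1
      have hzx : D.z * D.x ∈ N := by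
        have h2 := ksmul_mem_opSpan h1 c⁻¹
        rwa [smul_smul, inv_mul_cancel₀ hc, one_smul] at h2
      refine ⟨hzx, ?_⟩
      have h2 : D.w a b c * D.x ∈ N := mul_mem_opSpan hwN _
      rw [w_mul_x] at h2
      have h3 : b • (D.y * D.x) ∈ N := by
        have h4 := N.sub_mem h2 (ksmul_mem_opSpan hzx c)
        simpa using h4
      have h5 := ksmul_mem_opSpan h3 b⁻¹
      rwa [smul_smul, inv_mul_cancel₀ hb, one_smul] at h5
    · have h1 : D.w a b c * D.z ∈ N := mul_mem_opSpan hwN _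
      rw [w_mul_z] at h1
      have hzx : D.z * D.x ∈ N := by
        have h2 := ksmul_mem_opSpan h1 a⁻¹
        rwa [smul_smul, inv_mul_cancel₀ ha0, one_smul] at h2
      refine ⟨hzx, ?_⟩
      have h2 : D.w a b c * D.y ∈ N := mul_mem_opSpan hwN _
      rw [w_mul_y] at h2
      have h3 : (a * q) • (D.y * D.x) ∈ N := by
        have h4 := N.sub_mem (ksmul_mem_opSpan hzx c) h2
        have e : c • (D.z * D.x) - (-((a * q) • (D.y * D.x)) + c • (D.z * D.x))
            = (a * q) • (D.y * D.x) := by abel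
        rwa [e] at h4
      have h5 := ksmul_mem_opSpan h3 (a * q)⁻¹
      rwa [smul_smul, inv_mul_cancel₀ (mul_ne_zero ha0 hq), one_smul] at h5
  -- T ⊆ N
  have hsub2 : (T : Set Λ) ⊆ (Submodule.span Λᵐᵒᵖ {D.w a b c} : Set Λ) := by
    have hle : T ≤ (Submodule.span Λᵐᵒᵖ {D.w a b c}).restrictScalars k := by
      rw [hTdef, Submodule.span_le]
      rintro m hm
      simp only [Set.mem_insert_iff, Set.mem_singleton_iff] at hm
      rcases hm with rfl | rfl | rfl
      exacts [hwN, hzyxN.2, hzyxN.1]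
    exact fun m hm => hle hm
  have hNT : (Submodule.span Λᵐᵒᵖ {D.w a b c} : Set Λ) = (T : Set Λ) :=
    Set.Subset.antisymm hsub1 hsub2
  -- left multiplication tables
  have tabwl : ∀ i, D.basis i * D.w a b c ∈ T := by
    intro i
    fin_cases i <;> simp only [Fin.reduceFinMk, Fin.zero_eta, Fin.mk_one]
    · rw [D.hb0, one_mul]; exact hwT
    · rw [D.hb1, x_mul_w]; exact add_mem (neg_mem (T.smul_mem _ hyxT)) (T.smul_mem _ hzxT)
    · rw [D.hb2, y_mul_w]; exact T.smul_mem _ hyxT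
    · rw [D.hb3, z_mul_w]; exact T.smul_mem _ hzxT
    · rw [D.hb4, yx_mul_w]; exact zero_mem _
    · rw [D.hb5, zx_mul_w]; exact zero_mem _
  have tabyxl : ∀ i, D.basis i * (D.y * D.x) ∈ T := by
    intro i
    fin_cases i <;> simp only [Fin.reduceFinMk, Fin.zero_eta, Fin.mk_one]
    · rw [D.hb0, one_mul]; exact hyxT
    · rw [D.hb1, x_mul_yx]; exact zero_mem _
    · rw [D.hb2, y_mul_yx]; exact zero_mem _
    · rw [D.hb3, z_mul_yx]; exact zero_mem _
    · rw [D.hb4, yx_mul_yx]; exact zero_mem _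
    · rw [D.hb5, zx_mul_yx]; exact zero_mem _
  have tabzxl : ∀ i, D.basis i * (D.z * D.x) ∈ T := by
    intro i
    fin_cases i <;> simp only [Fin.reduceFinMk, Fin.zero_eta, Fin.mk_one]
    · rw [D.hb0, one_mul]; exact hzxT
    · rw [D.hb1, x_mul_zx]; exact zero_mem _
    · rw [D.hb2, y_mul_zx]; exact zero_mem _
    · rw [D.hb3, z_mul_zx]; exact zero_mem _
    · rw [D.hb4, yx_mul_zx]; exact zero_mem _
    · rw [D.hb5, zx_mul_zx]; exact zero_mem _
  -- left stability of T
  have hstabl : ∀ m ∈ T, ∀ r : Λ, r * m ∈ T := by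
    intro m hm
    induction hm using Submodule.span_induction with
    | mem u hu =>
      simp only [Set.mem_insert_iff, Set.mem_singleton_iff] at hu
      rcases hu with rfl | rfl | rfl
      · exact mul_left_mem D _ _ tabwl
      · exact mul_left_mem D _ _ tabyxl
      · exact mul_left_mem D _ _ tabzxl
    | zero => intro r; simp
    | add u v _ _ hu hv => intro r; rw [mul_add]; exact add_mem (hu r) (hv r)
    | smul cc u _ hu => intro r; rw [mul_smul_comm]; exact T.smul_mem _ (hu r)
  -- U ⊆ T
  have hUsub : (D.U a b c : Set Λ) ⊆ (T : Set Λ) := by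
    intro m hm
    rw [SetLike.mem_coe, LambdaAlg.U] at hm
    induction hm using Submodule.span_induction with
    | mem u hu =>
      simp only [Set.mem_insert_iff, Set.mem_singleton_iff] at hu
      rcases hu with rfl | rfl | rfl
      exacts [hwT, hyxT, hzxT]
    | zero => exact zero_mem _
    | add u v _ _ hu hv => exact add_mem hu hv
    | smul r u _ hu => rw [smul_eq_mul]; exact hstabl u hu r
  -- T ⊆ U
  have hTsub : (T : Set Λ) ⊆ (D.U a b c : Set Λ) := by
    have hle : T ≤ (D.U a b c).restrictScalars k := by
      rw [hTdef, Submodule.span_le]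
      exact fun m hm => Submodule.subset_span hm
    exact fun m hm => hle hm
  have hUT : (D.U a b c : Set Λ) = (T : Set Λ) := Set.Subset.antisymm hUsub hTsub
  refine ⟨?_, by rw [hNT, hUT]⟩
  -- linear independence
  have habc : a ≠ 0 ∨ b ≠ 0 ∨ c ≠ 0 := by
    rcases ha with h | h
    · exact Or.inl h
    · exact Or.inr (Or.inl (left_ne_zero_of_mul h))
  have hli : LinearIndependent k ![D.w a b c, D.y * D.x, D.z * D.x] := by
    rw [Fintype.linearIndependent_iff]
    intro g hg
    rw [Fin.sum_univ_three] at hg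
    simp only [Matrix.cons_val_zero, Matrix.cons_val_one, Matrix.head_cons,
      Matrix.cons_val_two, Matrix.tail_cons] at hg
    have hwb : D.w a b c = a • D.basis 1 + b • D.basis 2 + c • D.basis 3 := by
      rw [D.hb1, D.hb2, D.hb3]; rfl
    rw [hwb, ← D.hb4, ← D.hb5, smul_add, smul_add, smul_smul, smul_smul, smul_smul] at hg
    have key := fun i => DFunLike.congr_fun (congrArg D.basis.repr hg) i
    simp only [map_add, map_smul, Module.Basis.repr_self, map_zero, Finsupp.coe_add,
      Finsupp.coe_smul, Pi.add_apply, Pi.smul_apply, Finsupp.single_apply,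
      Finsupp.coe_zero, Pi.zero_apply, smul_eq_mul] at key
    have e1 := key 1
    have e2 := key 2
    have e3 := key 3
    have e4 := key 4
    have e5 := key 5
    simp only [Fin.reduceEq, reduceIte, mul_one, mul_zero, add_zero, zero_add] at e1 e2 e3 e4 e5
    intro i
    fin_cases i <;> simp only [Fin.reduceFinMk, Fin.zero_eta, Fin.mk_one]
    · rcases habc with h | h | h
      · exact (mul_eq_zero.mp e1).resolve_right h
      · exact (mul_eq_zero.mp e2).resolve_right h
      · exact (mul_eq_zero.mp e3).resolve_right h
    · exact e4
    · exact e5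
  have hrange : Set.range ![D.w a b c, D.y * D.x, D.z * D.x]
      = {D.w a b c, D.y * D.x, D.z * D.x} := by
    ext m
    simp [Matrix.range_cons, Matrix.range_empty]
    tauto
  have h3 : Module.finrank k ↥T = 3 := by
    rw [hTdef, ← hrange, finrank_span_eq_card hli]
    simp
  have hNr : (Submodule.span Λᵐᵒᵖ {D.w a b c}).restrictScalars k = T :=
    SetLike.coe_injective hNT
  have hfin : Module.finrank k
      ↥((Submodule.span Λᵐᵒᵖ {D.w a b c}).restrictScalars k) = 3 := by
    rw [hNr]; exact h3
  exact hfin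


lemma part2y :
    (Submodule.span Λᵐᵒᵖ {D.y} : Set Λ) = (Submodule.span k {D.y, D.y * D.x} : Set Λ)
    ∧ LinearIndependent k ![D.y, D.y * D.x] := by
  constructor
  · refine span_pair_eq D D.y (D.y * D.x) ?_ ⟨D.x, rfl⟩
    intro i
    fin_cases i <;> simp only [Fin.reduceFinMk, Fin.zero_eta, Fin.mk_one]
    · rw [D.hb0, mul_one]; exact Submodule.subset_span (by simp)
    · rw [D.hb1]; exact Submodule.subset_span (by simp)
    · rw [D.hb2, D.hyy]; exact zero_mem _
    · rw [D.hb3, D.hyz]; exact zero_mem _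
    · rw [D.hb4, y_mul_yx]; exact zero_mem _
    · rw [D.hb5, y_mul_zx]; exact zero_mem _
  · have h : ![D.y, D.y * D.x] = D.basis ∘ ![2, 4] := by
      funext i; fin_cases i <;> simp [D.hb2, D.hb4]
    rw [h]
    exact D.basis.linearIndependent.comp _ (by decide)

lemma part2z :
    (Submodule.span Λᵐᵒᵖ {D.z} : Set Λ) = (Submodule.span k {D.z, D.z * D.x} : Set Λ)
    ∧ LinearIndependent k ![D.z, D.z * D.x] := by
  constructor
  · refine span_pair_eq D D.z (D.z * D.x) ?_ ⟨D.x, rfl⟩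
    intro i
    fin_cases i <;> simp only [Fin.reduceFinMk, Fin.zero_eta, Fin.mk_one]
    · rw [D.hb0, mul_one]; exact Submodule.subset_span (by simp)
    · rw [D.hb1]; exact Submodule.subset_span (by simp)
    · rw [D.hb2, zy_eq]; exact Submodule.subset_span (by simp)
    · rw [D.hb3, D.hzz]; exact zero_mem _
    · rw [D.hb4, z_mul_yx]; exact zero_mem _
    · rw [D.hb5, z_mul_zx]; exact zero_mem _
  · have h : ![D.z, D.z * D.x] = D.basis ∘ ![3, 5] := by
      funext i; fin_cases i <;> simp [D.hb3, D.hb5]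
    rw [h]
    exact D.basis.linearIndependent.comp _ (by decide)

end RZAux

/-- If `a ≠ 0` or `bc ≠ 0`, the right ideal `(ax+by+cz)Λ` is 3-dimensional and
equals `U(a,b,c)` (so `U(a,b,c)` is two-sided); the right ideals `yΛ` and `zΛ`
are 2-dimensional with `k`-bases `{y, yx}` and `{z, zx}` respectively. -/
theorem statement7 (k : Type) [Field k] (q : k) (hq : q ≠ 0)
    (Λ : Type) [Ring Λ] [Algebra k Λ] (D : LambdaAlg k q Λ) :
    (∀ a b c : k, (a, b, c) ≠ (0, 0, 0) → (a ≠ 0 ∨ b * c ≠ 0) →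
      Module.finrank k ↥(Submodule.span Λᵐᵒᵖ {D.w a b c}) = 3
      ∧ (Submodule.span Λᵐᵒᵖ {D.w a b c} : Set Λ) = (D.U a b c : Set Λ))
    ∧ ((Submodule.span Λᵐᵒᵖ {D.y} : Set Λ) = (Submodule.span k {D.y, D.y * D.x} : Set Λ)
       ∧ LinearIndependent k ![D.y, D.y * D.x])
    ∧ ((Submodule.span Λᵐᵒᵖ {D.z} : Set Λ) = (Submodule.span k {D.z, D.z * D.x} : Set Λ)
       ∧ LinearIndependent k ![D.z, D.z * D.x]) := by
  exact ⟨fun a b c _ ha => RZAux.part1 D a b c hq ha, RZAux.part2y D, RZAux.part2z D⟩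
end
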